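/- Equivalence of LTL₃ with conventional LTL via restriction to infinite traces: for every formula φ, ⟦φ⟧₃ T ∩ Σ^ω = ⟦φ⟧ T and ⟦φ⟧₃ F ∩ Σ^ω = ⟦φ⟧ F. -/

import Mathlib

/-- A trace is a finite list of states or an infinite stream of states. -/
def Trace (σ : Type) := List σ ⊕ (ℕ → σ)

namespace Trace

variable {σ : Type}

/-- Concatenation of traces; if the first is infinite, the result is the first. -/
def app : Trace σ → Trace σ → Trace σ
  | Sum.inl l, Sum.inl l' => Sum.inl (l ++ l')
  | Sum.inl l, Sum.inr s =>
      Sum.inr (fun n => if h : n < l.length then l.get ⟨n, h⟩ else s (n - l.length))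
  | Sum.inr s, _ => Sum.inr s

instance : Append (Trace σ) := ⟨app⟩

/-- The empty trace ε. -/
def eps : Trace σ := Sum.inl []

/-- A trace is infinite iff it is a stream. -/
def Inf (t : Trace σ) : Prop := t.isRight

/-- Drop the first state of a trace. -/
def drop1 : Trace σ → Trace σ
  | Sum.inl [] => Sum.inl []
  | Sum.inl (_ :: l) => Sum.inl l
  | Sum.inr s => Sum.inr (fun n => s (n + 1))

/-- Drop the first `n` states of a trace. -/
def drop (t : Trace σ) (n : ℕ) : Trace σ := drop1^[n] t

/-- The first state of a trace, if any. -/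
def head? : Trace σ → Option σ
  | Sum.inl [] => none
  | Sum.inl (a :: _) => some a
  | Sum.inr s => some (s 0)

/-- The set of prefixes of a trace. -/
def pre (t : Trace σ) : Set (Trace σ) := {u | ∃ v, t = u ++ v}

/-- The set of prefixes of traces in a set: ↓X. -/
def preS (X : Set (Trace σ)) : Set (Trace σ) := ⋃ t ∈ X, pre t

/-- The set of extensions of a trace: ↑t. -/
def ext (t : Trace σ) : Set (Trace σ) := {u | ∃ v, u = t ++ v}

/-- The definitive prefixes of a set of traces: ↯X. -/
def dp (X : Set (Trace σ)) : Set (Trace σ) := {t | ext t ⊆ preS X}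

/-- A set of traces is definitive iff it equals its own set of definitive prefixes. -/
def Definitive (X : Set (Trace σ)) : Prop := X = dp X

/-- Definitive union ⩁ of a collection of trace sets. -/
def dUnionS (S : Set (Set (Trace σ))) : Set (Trace σ) := dp (⋃₀ S)

/-- Binary / indexed definitive union. -/
def dUnion (X Y : Set (Trace σ)) : Set (Trace σ) := dp (X ∪ Y)

def dUnionI {ι : Sort*} (X : ι → Set (Trace σ)) : Set (Trace σ) := dp (⋃ i, X i)

/-- The prepend operation ▷X. -/
def prepend (X : Set (Trace σ)) : Set (Trace σ) := {t | t.drop 1 ∈ X}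

/-- Σ^ω, the set of infinite traces. -/
def omegaSet (σ : Type) : Set (Trace σ) := {t | t.Inf}

/-- The first state of a trace, with the empty state as default. -/
def st0 {A : Type} (t : Trace (Set A)) : Set A := (t.head?).getD ∅

end Trace

/-- Syntax of LTL formulae over atomic propositions `A`. -/
inductive LTL (A : Type) where
  | top : LTL A
  | atom : A → LTL A
  | neg : LTL A → LTL A
  | and : LTL A → LTL A → LTL A
  | next : LTL A → LTL A
  | until_ : LTL A → LTL A → LTL A

namespace LTL

variable {A : Type}

open Trace

/-- Conventional LTL satisfaction on (infinite) traces. -/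
def Sat : Trace (Set A) → LTL A → Prop
  | t, .top => True
  | t, .atom a => a ∈ t.st0
  | t, .neg φ => ¬ Sat t φ
  | t, .and φ ψ => Sat t φ ∧ Sat t ψ
  | t, .next φ => Sat (t.drop 1) φ
  | t, .until_ φ ψ => ∃ i, Sat (t.drop i) ψ ∧ ∀ j < i, Sat (t.drop j) φ

/-- Answer-indexed family semantics of conventional LTL (sets of infinite traces). -/
def sem : LTL A → Bool → Set (Trace (Set A))
  | .top, true => omegaSet (Set A)
  | .top, false => ∅
  | .atom a, true => {t | t.Inf ∧ a ∈ t.st0}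
  | .atom a, false => {t | t.Inf ∧ a ∉ t.st0}
  | .neg φ, b => sem φ (!b)
  | .and φ ψ, true => sem φ true ∩ sem ψ true
  | .and φ ψ, false => sem φ false ∪ sem ψ false
  | .next φ, b => {t | t.drop 1 ∈ sem φ b}
  | .until_ φ ψ, true => {t | ∃ k, (∀ i < k, t.drop i ∈ sem φ true) ∧ t.drop k ∈ sem ψ true}
  | .until_ φ ψ, false => {t | ∀ k, (∃ i < k, t.drop i ∈ sem φ false) ∨ t.drop k ∈ sem ψ false}

/-- Answer-indexed family semantics of LTL₃ (definitive sets of finite-or-infinite traces). -/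
def sem3 : LTL A → Bool → Set (Trace (Set A))
  | .top, true => Set.univ
  | .top, false => ∅
  | .atom a, true => dp {t | t ≠ eps ∧ a ∈ t.st0}
  | .atom a, false => dp {t | t ≠ eps ∧ a ∉ t.st0}
  | .neg φ, b => sem3 φ (!b)
  | .and φ ψ, true => sem3 φ true ∩ sem3 ψ true
  | .and φ ψ, false => dUnion (sem3 φ false) (sem3 ψ false)
  | .next φ, b => prepend (sem3 φ b)
  | .until_ φ ψ, true =>
      dUnionI (fun k => (fun X => prepend X ∩ sem3 φ true)^[k] (sem3 ψ true))
  | .until_ φ ψ, false =>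
      ⋂ k, (fun X => dUnion (prepend X) (sem3 φ false))^[k] (sem3 ψ false)

end LTL

namespace Trace

variable {σ : Type}

theorem inf_exists {t : Trace σ} (h : t.Inf) : ∃ s, t = Sum.inr s := by
  cases t with
  | inl l => simp [Inf, Sum.isRight] at h
  | inr s => exact ⟨s, rfl⟩

theorem mem_dp_iff {X : Set (Trace σ)} {t : Trace σ} (h : t.Inf) : t ∈ dp X ↔ t ∈ X := by
  obtain ⟨s, rfl⟩ := inf_exists h
  constructor
  · intro hd
    have h1 : (Sum.inr s : Trace σ) ∈ ext (Sum.inr s) := ⟨eps, rfl⟩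
    have h2 := hd h1
    replace h2 := Set.mem_iUnion₂.mp h2
    obtain ⟨t', ht', v, hv⟩ := h2
    have hv' : t' = Sum.inr s := hv
    exact hv' ▸ ht'
  · intro hx u hu
    obtain ⟨v, hv⟩ := hu
    have hv' : u = Sum.inr s := hv
    subst hv'
    refine Set.mem_iUnion₂.mpr ?_
    exact ⟨Sum.inr s, hx, Exists.intro eps rfl⟩

theorem inf_drop1 {t : Trace σ} : (drop1 t).Inf ↔ t.Inf := by
  cases t with
  | inl l => cases l <;> simp [drop1, Inf, Sum.isRight]
  | inr s => simp [drop1, Inf, Sum.isRight]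

theorem inf_drop {t : Trace σ} (n : ℕ) : (t.drop n).Inf ↔ t.Inf := by
  induction n with
  | zero => rfl
  | succ n ih =>
    rw [drop, Function.iterate_succ_apply', ← drop, inf_drop1]
    exact ih

theorem mem_prepend {X : Set (Trace σ)} {t : Trace σ} : t ∈ prepend X ↔ t.drop 1 ∈ X := Iff.rfl

theorem mem_dUnion_iff {X Y : Set (Trace σ)} {t : Trace σ} (h : t.Inf) :
    t ∈ dUnion X Y ↔ t ∈ X ∨ t ∈ Y := by
  rw [dUnion, mem_dp_iff h]; exact Set.mem_union t X Y

theorem drop_drop (t : Trace σ) (m n : ℕ) : (t.drop m).drop n = t.drop (n + m) := by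
  simp [drop, Function.iterate_add_apply]

end Trace

namespace LTL

variable {A : Type}

open Trace

theorem sem_inf : ∀ (φ : LTL A) (b : Bool) (t : Trace (Set A)), t ∈ sem φ b → t.Inf := by
  intro φ
  induction φ with
  | top =>
    intro b t ht
    cases b
    · exact absurd ht (Set.notMem_empty t)
    · exact ht
  | atom a => intro b t ht; cases b <;> exact ht.1
  | neg φ ih => intro b t ht; exact ih (!b) t ht
  | and φ ψ ihφ ihψ =>
    intro b t ht
    cases b
    · rcases ht with h | h
      · exact ihφ false t h
      · exact ihψ false t h
    · exact ihφ true t ht.1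
  | next φ ih => intro b t ht; exact (inf_drop 1).mp (ih b _ ht)
  | until_ φ ψ ihφ ihψ =>
    intro b t ht
    cases b
    · rcases ht 0 with ⟨i, hi, _⟩ | h
      · omega
      · exact (inf_drop 0).mp (ihψ false _ h)
    · obtain ⟨k, _, hk⟩ := ht
      exact (inf_drop k).mp (ihψ true _ hk)

private theorem forall_lt_succ_iff {P : ℕ → Prop} {k : ℕ} :
    (∀ i < k + 1, P i) ↔ P 0 ∧ ∀ i < k, P (i + 1) := by
  constructor
  · exact fun h => ⟨h 0 (Nat.succ_pos k), fun i hi => h (i + 1) (Nat.succ_lt_succ hi)⟩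
  · rintro ⟨h0, h⟩ i hi
    cases i with
    | zero => exact h0
    | succ i => exact h i (Nat.lt_of_succ_lt_succ hi)

theorem key (φ : LTL A) :
    ∀ (b : Bool) (t : Trace (Set A)), t.Inf → (t ∈ sem3 φ b ↔ t ∈ sem φ b) := by
  induction φ with
  | top =>
    intro b t ht
    cases b
    · simp [sem3, sem]
    · simp only [sem3, sem, Set.mem_univ, omegaSet, Set.mem_setOf_eq]
      exact iff_of_true trivial ht
  | atom a =>
    intro b t ht
    obtain ⟨s, rfl⟩ := inf_exists ht
    have hne : (Sum.inr s : Trace (Set A)) ≠ eps := by simp [eps]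
    cases b <;> simp [sem3, sem, mem_dp_iff ht, hne, ht] <;>
      exact Iff.intro (fun h => And.intro ht h.2) (fun h => And.intro hne h.2)
  | neg φ ih =>
    intro b t ht
    cases b <;> exact ih _ t ht
  | and φ ψ ihφ ihψ =>
    intro b t ht
    cases b
    · simp only [sem3, sem, dUnion, mem_dp_iff ht, Set.mem_union]
      rw [ihφ false t ht, ihψ false t ht]
    · simp only [sem3, sem, Set.mem_inter_iff]
      rw [ihφ true t ht, ihψ true t ht]
  | next φ ih =>
    intro b t ht
    simp only [sem3, sem, mem_prepend, Set.mem_setOf_eq]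
    exact ih b _ ((inf_drop 1).mpr ht)
  | until_ φ ψ ihφ ihψ =>
    intro b t ht
    cases b
    · -- false case
      have hiter : ∀ (k : ℕ) (t : Trace (Set A)), t.Inf →
          (t ∈ (fun X => dUnion (prepend X) (sem3 φ false))^[k] (sem3 ψ false) ↔
            ((∃ i < k, t.drop i ∈ sem φ false) ∨ t.drop k ∈ sem ψ false)) := by
        intro k
        induction k with
        | zero =>
          intro t ht
          simp only [Function.iterate_zero_apply]
          rw [ihψ false t ht]
          simp [drop]
        | succ k ih =>
          intro t ht
          simp only [Function.iterate_succ_apply', mem_dUnion_iff ht, mem_prepend]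
          rw [ih (t.drop 1) ((inf_drop 1).mpr ht), ihφ false t ht]
          constructor
          · rintro (⟨⟨i, hi, h⟩ | h⟩ | h)
            · rw [drop_drop] at h
              exact Or.inl ⟨i + 1, Nat.succ_lt_succ hi, h⟩
            · rw [drop_drop] at h
              exact Or.inr h
            · exact Or.inl ⟨0, Nat.succ_pos k, h⟩
          · rintro (⟨i, hi, h⟩ | h)
            · cases i with
              | zero => exact Or.inr h
              | succ i =>
                refine Or.inl (Or.inl ⟨i, Nat.lt_of_succ_lt_succ hi, ?_⟩)
                rw [drop_drop]; exact h
            · refine Or.inl (Or.inr ?_)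
              rw [drop_drop]; exact h
      simp only [sem3, sem, Set.mem_iInter, Set.mem_setOf_eq]
      exact forall_congr' fun k => hiter k t ht
    · -- true case
      have hiter : ∀ (k : ℕ) (t : Trace (Set A)), t.Inf →
          (t ∈ (fun X => prepend X ∩ sem3 φ true)^[k] (sem3 ψ true) ↔
            ((∀ i < k, t.drop i ∈ sem φ true) ∧ t.drop k ∈ sem ψ true)) := by
        intro k
        induction k with
        | zero =>
          intro t ht
          simp only [Function.iterate_zero_apply]
          rw [ihψ true t ht]
          simp [drop]
        | succ k ih =>
          intro t ht
          simp only [Function.iterate_succ_apply', Set.mem_inter_iff, mem_prepend]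
          rw [ih (t.drop 1) ((inf_drop 1).mpr ht), ihφ true t ht]
          rw [forall_lt_succ_iff]
          constructor
          · rintro ⟨⟨hall, hk⟩, hφ⟩
            rw [drop_drop] at hk
            refine ⟨⟨hφ, fun i hi => ?_⟩, hk⟩
            have := hall i hi
            rwa [drop_drop] at this
          · rintro ⟨⟨h0, hall⟩, hk⟩
            refine ⟨⟨fun i hi => ?_, ?_⟩, h0⟩
            · rw [drop_drop]; exact hall i hi
            · rw [drop_drop]; exact hk
      simp only [sem3, sem, dUnionI, mem_dp_iff ht, Set.mem_iUnion, Set.mem_setOf_eq]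
      exact exists_congr fun k => hiter k t ht

end LTL

theorem sem3_inter_omega_eq_sem {A : Type} (φ : LTL A) :
    LTL.sem3 φ true ∩ Trace.omegaSet (Set A) = LTL.sem φ true ∧
    LTL.sem3 φ false ∩ Trace.omegaSet (Set A) = LTL.sem φ false := by
  constructor <;>
  · ext t
    simp only [Set.mem_inter_iff, Trace.omegaSet, Set.mem_setOf_eq]
    constructor
    · rintro ⟨h3, hinf⟩
      exact (LTL.key φ _ t hinf).mp h3
    · intro hs
      have hinf := LTL.sem_inf φ _ t hs
      exact ⟨(LTL.key φ _ t hinf).mpr hs, hinf⟩
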